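/- arXiv:2301.11153 — 3 statements merged into one kernel-verified Lean document; each statement's English description precedes it below -/
import Mathlib

section
/- Let n ≥ 1 be a natural number and T a natural number with T ≥ n. If α_l ≥ 1/n for all l < T, then Y_T ≤ (γ + (2/e)·β)·D, where β = (1-γ)/2 and e is Euler's number. -/
/-- Polynomial learning rate lemma (deterministic core): if `n ≥ 1`,
`T ≥ n`, and `α_l ≥ 1/n` for all `l < T`, then
`Y_T ≤ (γ + (2/e)·β)·D` with `β = (1-γ)/2`. -/
theorem Y_bound_polynomial_rate (D γ : ℝ) (α : ℕ → ℝ) (Y : ℕ → ℝ)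
    (hD : 0 < D) (hγ0 : 0 ≤ γ) (hγ1 : γ < 1)
    (hα : ∀ t, 0 ≤ α t ∧ α t ≤ 1)
    (hY0 : Y 0 = D)
    (hYrec : ∀ t, Y (t + 1) = (1 - α t) * Y t + α t * γ * D)
    (n T : ℕ) (hn : 1 ≤ n) (hT : n ≤ T)
    (hrate : ∀ l < T, α l ≥ 1 / (n : ℝ)) :
    Y T ≤ (γ + (2 / Real.exp 1) * ((1 - γ) / 2)) * D := by
  have hn1 : (1:ℝ) ≤ (n:ℝ) := by exact_mod_cast hn
  have hn0 : (0:ℝ) < (n:ℝ) := lt_of_lt_of_le one_pos hn1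
  have hq0 : (0:ℝ) ≤ 1 - 1/(n:ℝ) := by
    have : 1/(n:ℝ) ≤ 1 := by
      rw [div_le_one hn0]; exact hn1
    linarith
  have hq1 : 1 - 1/(n:ℝ) ≤ 1 := by
    have : (0:ℝ) ≤ 1/(n:ℝ) := by positivity
    linarith
  -- induction: for t ≤ T, 0 ≤ Y t - γ D ≤ (1-γ) D (1-1/n)^t
  have key : ∀ t ≤ T, 0 ≤ Y t - γ * D ∧
      Y t - γ * D ≤ (1 - γ) * D * (1 - 1/(n:ℝ))^t := by
    intro t
    induction t with
    | zero =>
      intro _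
      constructor
      · rw [hY0]; nlinarith
      · rw [hY0]; simp; nlinarith
    | succ t ih =>
      intro hle
      have htT : t < T := Nat.lt_of_succ_le hle
      obtain ⟨h0, h1⟩ := ih (le_of_lt htT)
      have hrec : Y (t+1) - γ * D = (1 - α t) * (Y t - γ * D) := by
        rw [hYrec t]; ring
      have hαt := hα t
      have hαl := hrate t htT
      have ha0 : 0 ≤ 1 - α t := by linarith [hαt.2]
      have ha1 : 1 - α t ≤ 1 - 1/(n:ℝ) := by linarith [hαl]
      constructor
      · rw [hrec]; exact mul_nonneg ha0 h0
      · rw [hrec, pow_succ]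
        calc (1 - α t) * (Y t - γ * D)
            ≤ (1 - 1/(n:ℝ)) * ((1 - γ) * D * (1 - 1/(n:ℝ))^t) :=
              mul_le_mul ha1 h1 h0 hq0
          _ = (1 - γ) * D * ((1 - 1/(n:ℝ))^t * (1 - 1/(n:ℝ))) := by ring
  obtain ⟨_, hYT⟩ := key T le_rfl
  -- (1-1/n)^T ≤ (1-1/n)^n ≤ exp(-1)
  have hpow1 : (1 - 1/(n:ℝ))^T ≤ (1 - 1/(n:ℝ))^n :=
    pow_le_pow_of_le_one hq0 hq1 hT
  have hexp : 1 - 1/(n:ℝ) ≤ Real.exp (-(1/(n:ℝ))) := by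
    have := Real.add_one_le_exp (-(1/(n:ℝ)))
    linarith
  have hpow2 : (1 - 1/(n:ℝ))^n ≤ Real.exp (-(1/(n:ℝ)))^n :=
    pow_le_pow_left₀ hq0 hexp n
  have hexpn : Real.exp (-(1/(n:ℝ)))^n = Real.exp (-1) := by
    rw [← Real.exp_nat_mul]
    congr 1
    field_simp
  have hfinal : (1 - 1/(n:ℝ))^T ≤ Real.exp (-1) := by
    rw [← hexpn]; exact le_trans hpow1 hpow2
  have hcoef : (0:ℝ) ≤ (1 - γ) * D := by nlinarith
  have : Y T - γ * D ≤ (1 - γ) * D * Real.exp (-1) :=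
    le_trans hYT (by exact mul_le_mul_of_nonneg_left hfinal hcoef)
  have hE : Real.exp (-1) = 1 / Real.exp 1 := by
    rw [Real.exp_neg]; exact (one_div _).symm
  rw [hE] at this
  have hEpos := Real.exp_pos 1
  have : Y T ≤ γ * D + (1 - γ) * D * (1 / Real.exp 1) := by linarith
  calc Y T ≤ γ * D + (1 - γ) * D * (1 / Real.exp 1) := this
    _ = (γ + (2 / Real.exp 1) * ((1 - γ) / 2)) * D := by field_simp
end

section
/- Let ψ be a real number with 0 < ψ ≤ 0.712, let n ≥ 1 be a real number, and let T be a natural number with T ≥ (1+ψ)·n. If α_l ≥ 1/((1+ψ)·n) for all l < T, then Y_T ≤ (γ + (2/(2+ψ))·β)·D, where β = (1-γ)/2. -/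
/-- Linear learning rate lemma (deterministic core): if `0 < ψ ≤ 0.712`,
`n ≥ 1`, `T ≥ (1+ψ)·n`, and `α_l ≥ 1/((1+ψ)·n)` for all `l < T`, then
`Y_T ≤ (γ + (2/(2+ψ))·β)·D` with `β = (1-γ)/2`. -/
theorem Y_bound_linear_rate (D γ : ℝ) (α : ℕ → ℝ) (Y : ℕ → ℝ)
    (hD : 0 < D) (hγ0 : 0 ≤ γ) (hγ1 : γ < 1)
    (hα : ∀ t, 0 ≤ α t ∧ α t ≤ 1)
    (hY0 : Y 0 = D)
    (hYrec : ∀ t, Y (t + 1) = (1 - α t) * Y t + α t * γ * D)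
    (ψ n : ℝ) (hψ0 : 0 < ψ) (hψ1 : ψ ≤ 0.712) (hn : 1 ≤ n)
    (T : ℕ) (hT : (T : ℝ) ≥ (1 + ψ) * n)
    (hrate : ∀ l < T, α l ≥ 1 / ((1 + ψ) * n)) :
    Y T ≤ (γ + (2 / (2 + ψ)) * ((1 - γ) / 2)) * D := by
  have hm : (0:ℝ) < (1 + ψ) * n := by nlinarith
  set c : ℝ := 1 / ((1 + ψ) * n) with hc
  have hc0 : 0 < c := by positivity
  -- closed form for Y
  have hform : ∀ t, Y t = γ * D + (1 - γ) * D * ∏ l ∈ Finset.range t, (1 - α l) := by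
    intro t
    induction t with
    | zero => simp [hY0]; ring
    | succ t ih =>
      rw [hYrec t, ih, Finset.prod_range_succ]
      ring
  rw [hform T]
  -- bound the product
  have hprod : (∏ l ∈ Finset.range T, (1 - α l)) ≤ 1 / (2 + ψ) := by
    have h1 : (∏ l ∈ Finset.range T, (1 - α l)) ≤ ∏ l ∈ Finset.range T, Real.exp (-c) := by
      apply Finset.prod_le_prod
      · intro i _; linarith [(hα i).2]
      · intro i hi
        have hr := hrate i (Finset.mem_range.mp hi)
        have := Real.add_one_le_exp (-c)
        linarith
    have h2 : (∏ l ∈ Finset.range T, Real.exp (-c)) = Real.exp (-(c * T)) := by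
      rw [Finset.prod_const, Finset.card_range, ← Real.exp_nat_mul]
      ring_nf
    have h3 : Real.exp (-(c * T)) ≤ Real.exp (-1) := by
      apply Real.exp_le_exp.mpr
      have : (1:ℝ) ≤ c * T := by
        rw [hc, div_mul_eq_mul_div, le_div_iff₀ hm]
        nlinarith
      linarith
    have h4 : Real.exp (-1) ≤ 1 / (2 + ψ) := by
      rw [Real.exp_neg, one_div]
      exact inv_anti₀ (by positivity) (by linarith [Real.exp_one_gt_d9])
    calc (∏ l ∈ Finset.range T, (1 - α l)) ≤ Real.exp (-(c*T)) := by rw [← h2]; exact h1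
      _ ≤ 1 / (2 + ψ) := le_trans h3 h4
  have hcoef : 0 ≤ (1 - γ) * D := by nlinarith
  have : (1 - γ) * D * (∏ l ∈ Finset.range T, (1 - α l)) ≤ (1 - γ) * D * (1 / (2 + ψ)) :=
    mul_le_mul_of_nonneg_left hprod hcoef
  have h2ψ : (0:ℝ) < 2 + ψ := by linarith
  calc γ * D + (1 - γ) * D * (∏ l ∈ Finset.range T, (1 - α l))
      ≤ γ * D + (1 - γ) * D * (1 / (2 + ψ)) := by linarith
    _ = (γ + (2 / (2 + ψ)) * ((1 - γ) / 2)) * D := by field_simp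
end

section
/- Let ω ∈ (0,1) and L > 0 be real numbers, and let (a_k)_{k≥0} be a sequence of real numbers with a_0 > 0 satisfying the recurrence a_{k+1} = a_k + L·a_k^ω (real power). Then there exists a constant c > 0 (depending on ω, L, and a_0) such that a_k ≥ c·(k+1)^{1/(1-ω)} for every natural number k. -/
open Real Set

private lemma key_rpow (p x : ℝ) (hp : 1 ≤ p) (hx : 1 ≤ x) :
    (x + 1) ^ p ≤ x ^ p + (2 ^ p - 1) * x ^ (p - 1) := by
  have hx0 : 0 < x := lt_of_lt_of_le one_pos hx
  set t : ℝ := 1 / x with ht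
  have ht0 : 0 < t := by positivity
  have ht1 : t ≤ 1 := by
    rw [ht, div_le_one hx0]; exact hx
  -- convexity: (1+t)^p ≤ 1 + (2^p - 1) * t
  have hconv := (convexOn_rpow hp).2 (show (1:ℝ) ∈ Ici 0 by simp)
    (show (2:ℝ) ∈ Ici 0 by norm_num)
    (show (0:ℝ) ≤ 1 - t by linarith) (le_of_lt ht0) (by ring)
  have h1 : (1 + t) ^ p ≤ 1 + (2 ^ p - 1) * t := by
    have : ((1 - t) • (1:ℝ) + t • (2:ℝ)) = 1 + t := by simp only [smul_eq_mul]; ring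
    rw [this] at hconv
    simp only [smul_eq_mul] at hconv
    rw [Real.one_rpow] at hconv
    nlinarith [hconv]
  have hxt : x + 1 = x * (1 + t) := by
    rw [ht, mul_add, mul_one, mul_one_div, div_self (ne_of_gt hx0)]
  calc (x + 1) ^ p = (x * (1 + t)) ^ p := by rw [hxt]
    _ = x ^ p * (1 + t) ^ p := Real.mul_rpow (le_of_lt hx0) (by linarith)
    _ ≤ x ^ p * (1 + (2 ^ p - 1) * t) := by
        apply mul_le_mul_of_nonneg_left h1 (Real.rpow_nonneg (le_of_lt hx0) p)
    _ = x ^ p + (2 ^ p - 1) * (x ^ p * t) := by ring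
    _ = x ^ p + (2 ^ p - 1) * x ^ (p - 1) := by
        congr 1
        rw [ht, mul_one_div, eq_comm]
        rw [Real.rpow_sub hx0, Real.rpow_one]

/-- The recurrence `a_{k+1} = a_k + L·a_k^ω` with `ω ∈ (0,1)`, `L > 0`,
`a_0 > 0` grows at least like a constant multiple of `(k+1)^{1/(1-ω)}`. -/
theorem recurrence_lower_bound (ω L : ℝ) (a : ℕ → ℝ)
    (hω0 : 0 < ω) (hω1 : ω < 1) (hL : 0 < L)
    (ha0 : 0 < a 0)
    (harec : ∀ k, a (k + 1) = a k + L * a k ^ ω) :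
    ∃ c > 0, ∀ k : ℕ, a k ≥ c * ((k : ℝ) + 1) ^ (1 / (1 - ω)) := by
  have h1ω : 0 < 1 - ω := by linarith
  set p : ℝ := 1 / (1 - ω) with hpdef
  have hp0 : 0 < p := by positivity
  have hp1 : 1 ≤ p := by
    rw [hpdef, le_div_iff₀ h1ω]; linarith
  have hpω : p * ω = p - 1 := by
    rw [hpdef]; field_simp; ring
  set K : ℝ := 2 ^ p - 1 with hK
  have hK0 : 0 < K := by
    have : (2:ℝ) ^ (1:ℝ) ≤ 2 ^ p := Real.rpow_le_rpow_of_exponent_le (by norm_num) hp1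
    rw [Real.rpow_one] at this
    simp only [hK]; linarith
  set c : ℝ := min (a 0) ((L / K) ^ p) with hc
  have hLK : 0 < L / K := by positivity
  have hc0 : 0 < c := lt_min ha0 (Real.rpow_pos_of_pos hLK p)
  have hcK : c * K ≤ L * c ^ ω := by
    have h1 : c ^ (1 - ω) ≤ L / K := by
      calc c ^ (1 - ω) ≤ ((L / K) ^ p) ^ (1 - ω) :=
            Real.rpow_le_rpow (le_of_lt hc0) (min_le_right _ _) (le_of_lt h1ω)
        _ = (L / K) ^ (p * (1 - ω)) := by rw [← Real.rpow_mul (le_of_lt hLK)]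
        _ = L / K := by
            rw [hpdef, one_div_mul_cancel (ne_of_gt h1ω), Real.rpow_one]
    have h2 : c = c ^ (1 - ω) * c ^ ω := by
      rw [← Real.rpow_add hc0]; norm_num
    calc c * K = c ^ (1 - ω) * c ^ ω * K := by rw [← h2]
      _ ≤ (L / K) * c ^ ω * K := by
          apply mul_le_mul_of_nonneg_right _ (le_of_lt hK0)
          exact mul_le_mul_of_nonneg_right h1 (Real.rpow_nonneg (le_of_lt hc0) ω)
      _ = L * c ^ ω := by field_simp
  refine ⟨c, hc0, ?_⟩
  intro k
  induction k with
  | zero =>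
    simp only [Nat.cast_zero, zero_add, Real.one_rpow, mul_one, ge_iff_le]
    exact min_le_left _ _
  | succ k ih =>
    set x : ℝ := (k : ℝ) + 1 with hx
    have hx1 : 1 ≤ x := by
      rw [hx]; have : (0:ℝ) ≤ (k:ℝ) := Nat.cast_nonneg k; linarith
    have hx0 : 0 < x := lt_of_lt_of_le one_pos hx1
    have hxp0 : 0 < x ^ p := Real.rpow_pos_of_pos hx0 p
    have hxp1 : 0 ≤ x ^ (p - 1) := Real.rpow_nonneg (le_of_lt hx0) _
    have hak : 0 < a k := lt_of_lt_of_le (by positivity) ih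
    have h3 : L * (c * x ^ p) ^ ω ≤ L * a k ^ ω :=
      mul_le_mul_of_nonneg_left
        (Real.rpow_le_rpow (by positivity) ih (le_of_lt hω0)) (le_of_lt hL)
    have h4 : (c * x ^ p) ^ ω = c ^ ω * x ^ (p - 1) := by
      rw [Real.mul_rpow (le_of_lt hc0) (le_of_lt hxp0),
        ← Real.rpow_mul (le_of_lt hx0), hpω]
    have hkey := key_rpow p x hp1 hx1
    have hcast : ((k + 1 : ℕ) : ℝ) + 1 = x + 1 := by push_cast; ring
    rw [ge_iff_le, hcast, harec k]
    calc c * (x + 1) ^ p ≤ c * (x ^ p + K * x ^ (p - 1)) :=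
          mul_le_mul_of_nonneg_left hkey (le_of_lt hc0)
      _ = c * x ^ p + (c * K) * x ^ (p - 1) := by ring
      _ ≤ c * x ^ p + (L * c ^ ω) * x ^ (p - 1) := by
          have := mul_le_mul_of_nonneg_right hcK hxp1
          linarith
      _ = c * x ^ p + L * (c * x ^ p) ^ ω := by rw [h4]; ring
      _ ≤ a k + L * a k ^ ω := by linarith [ih]
end
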